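/- Fix 0 ≤ α < 1 and a, b ≥ 0. Let x : [0,∞) → [0,∞) be a continuous function such that for each t ≥ 0, x(t) ≤ a + b t^α ∫_0^t (t−s)^{−α} s^{−α} x(s) ds. Then for all t ≥ 0, x(t) ≤ a Γ(1−α) ∑_{n=0}^∞ (b Γ(1−α) t^{1−α})^n / Γ((n+1)(1−α)), where Γ denotes the Gamma function. -/

import Mathlib

open MeasureTheory Filter Set Topology intervalIntegral

set_option maxHeartbeats 1000000 in
lemma betaIntegrable {p q T : ℝ} (hp : 0 < p) (hq : 0 < q) (hT : 0 < T) :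
    IntervalIntegrable (fun s => s ^ (p-1) * (T - s) ^ (q-1)) volume 0 T := by
  have h1 : IntervalIntegrable (fun s => s ^ (p-1) * (T - s) ^ (q-1)) volume 0 (T/2) := by
    apply (intervalIntegrable_rpow' (by linarith)).mul_continuousOn
    apply ContinuousOn.rpow_const (by fun_prop)
    intro s hs
    rw [uIcc_of_le (by linarith)] at hs
    left; intro h
    have := sub_eq_zero.mp h
    linarith [hs.2]
  have h2 : IntervalIntegrable (fun s => s ^ (p-1) * (T - s) ^ (q-1)) volume (T/2) T := by
    have h3 : IntervalIntegrable (fun s => (T - s) ^ (q-1)) volume (T/2) T := by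
      have := ((intervalIntegrable_rpow' (a := 0) (b := T/2) (r := q-1) (by linarith)).comp_sub_left T).symm
      simpa [sub_half] using this
    apply h3.continuousOn_mul
    apply ContinuousOn.rpow_const (by fun_prop)
    intro s hs
    rw [uIcc_of_le (by linarith)] at hs
    exact Or.inl (ne_of_gt (by linarith [hs.1]))
  exact h1.trans h2

lemma betaEval {p q T : ℝ} (hp : 0 < p) (hq : 0 < q) (hT : 0 < T) :
    ∫ s in (0:ℝ)..T, s ^ (p-1) * (T - s) ^ (q-1)
      = Real.Gamma p * Real.Gamma q / Real.Gamma (p+q) * T ^ (p + q - 1) := by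
  have hGpq : Real.Gamma (p+q) ≠ 0 := (Real.Gamma_pos_of_pos (by linarith)).ne'
  have hB : Complex.betaIntegral p q = ((Real.Gamma p * Real.Gamma q / Real.Gamma (p+q) : ℝ) : ℂ) := by
    have h := Complex.Gamma_mul_Gamma_eq_betaIntegral (s := (p:ℂ)) (t := (q:ℂ)) (by simpa) (by simpa)
    rw [← Complex.ofReal_add, Complex.Gamma_ofReal, Complex.Gamma_ofReal, Complex.Gamma_ofReal] at h
    have hG : (Real.Gamma (p+q) : ℂ) ≠ 0 := by exact_mod_cast hGpq
    rw [Complex.ofReal_div, Complex.ofReal_mul, eq_div_iff hG]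
    linear_combination -h
  have hs := Complex.betaIntegral_scaled (p:ℂ) (q:ℂ) hT
  have hL : (∫ (s : ℝ) in (0:ℝ)..T, ((s:ℂ)) ^ ((p:ℂ) - 1) * ((T:ℂ) - s) ^ ((q:ℂ) - 1))
      = ((∫ s in (0:ℝ)..T, s ^ (p-1) * (T - s) ^ (q-1) : ℝ) : ℂ) := by
    rw [← intervalIntegral.integral_ofReal]
    apply intervalIntegral.integral_congr
    intro s hs'
    rw [uIcc_of_le hT.le] at hs'
    show (s:ℂ) ^ ((p:ℂ)-1) * ((T:ℂ) - s) ^ ((q:ℂ)-1) = ((s ^ (p-1) * (T-s) ^ (q-1) : ℝ) : ℂ)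
    rw [show ((p:ℂ)-1) = ((p-1:ℝ):ℂ) by push_cast; ring,
        show ((q:ℂ)-1) = ((q-1:ℝ):ℂ) by push_cast; ring,
        show ((T:ℂ) - (s:ℂ)) = ((T - s : ℝ):ℂ) by push_cast; ring,
        ← Complex.ofReal_cpow hs'.1, ← Complex.ofReal_cpow (show (0:ℝ) ≤ T - s by linarith [hs'.2])]
    push_cast
    ring
  have hT' : ((T:ℂ)) ^ ((p:ℂ) + (q:ℂ) - 1) = ((T ^ (p+q-1) : ℝ) : ℂ) := by
    rw [show ((p:ℂ)+q-1) = ((p+q-1:ℝ):ℂ) by push_cast; ring, ← Complex.ofReal_cpow hT.le]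
  rw [hL, hB, hT', ← Complex.ofReal_mul] at hs
  have h2 := Complex.ofReal_inj.mp hs
  rw [h2]; ring

lemma gamma_step {δ w : ℝ} (hδ0 : 0 < δ) (hδ1 : δ ≤ 1) (hw : 0 < w) :
    w * Real.Gamma w ≤ Real.Gamma (w + δ) * (w + δ) ^ (1-δ) := by
  have hGp : ∀ y : ℝ, 0 < y → 0 < Real.Gamma y := fun y hy => Real.Gamma_pos_of_pos hy
  have h1 : w + δ ∈ Set.Ioi (0:ℝ) := by simp; linarith
  have h2 : w + 1 + δ ∈ Set.Ioi (0:ℝ) := by simp; linarith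
  have key := Real.convexOn_log_Gamma.2 h1 h2 hδ0.le (by linarith : (0:ℝ) ≤ 1-δ) (by ring)
  simp only [smul_eq_mul, Function.comp_apply] at key
  have harg : δ * (w + δ) + (1-δ) * (w + 1 + δ) = w + 1 := by ring
  rw [harg] at key
  have e1 : Real.Gamma (w+1) = w * Real.Gamma w := Real.Gamma_add_one hw.ne'
  have e2 : Real.Gamma (w+1+δ) = (w+δ) * Real.Gamma (w+δ) := by
    rw [show w+1+δ = (w+δ)+1 by ring, Real.Gamma_add_one (by linarith : w+δ ≠ 0)]
  have hGwd := hGp _ (by linarith : (0:ℝ) < w + δ)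
  have hG1 := hGp _ (by linarith : (0:ℝ) < w + 1)
  have expkey : Real.Gamma (w+1) ≤ Real.Gamma (w+δ) ^ δ * Real.Gamma (w+1+δ) ^ (1-δ) := by
    calc Real.Gamma (w+1) = Real.exp (Real.log (Real.Gamma (w+1))) := (Real.exp_log hG1).symm
    _ ≤ Real.exp (δ * Real.log (Real.Gamma (w+δ)) + (1-δ) * Real.log (Real.Gamma (w+1+δ))) :=
        Real.exp_le_exp.mpr key
    _ = Real.Gamma (w+δ) ^ δ * Real.Gamma (w+1+δ) ^ (1-δ) := by
        rw [Real.exp_add, Real.rpow_def_of_pos hGwd, Real.rpow_def_of_pos (by rw [e2]; positivity)]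
        ring_nf
  rw [e1, e2] at expkey
  calc w * Real.Gamma w ≤ Real.Gamma (w+δ) ^ δ * ((w+δ) * Real.Gamma (w+δ)) ^ (1 - δ) := expkey
  _ = Real.Gamma (w + δ) * (w + δ) ^ (1-δ) := by
      rw [Real.mul_rpow (by linarith) hGwd.le,
        show Real.Gamma (w+δ) ^ δ * ((w+δ)^(1-δ) * Real.Gamma (w+δ) ^ (1-δ))
          = (Real.Gamma (w+δ) ^ δ * Real.Gamma (w+δ) ^ (1-δ)) * (w+δ)^(1-δ) by ring,
        ← Real.rpow_add hGwd, show δ + (1-δ) = 1 by ring, Real.rpow_one]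


lemma summableML {δ : ℝ} (hδ0 : 0 < δ) (hδ1 : δ ≤ 1) (z : ℝ) (hz : 0 ≤ z) :
    Summable (fun n : ℕ => z ^ n / Real.Gamma (((n:ℝ)+1) * δ)) := by
  apply summable_of_ratio_norm_eventually_le (r := 1/2) (by norm_num)
  have htend : Tendsto (fun n : ℕ => (((n:ℝ)+2)*δ)^δ) atTop atTop := by
    apply (tendsto_rpow_atTop hδ0).comp
    apply Tendsto.atTop_mul_const hδ0
    exact tendsto_atTop_add_const_right _ 2 tendsto_natCast_atTop_atTop
  filter_upwards [htend.eventually_ge_atTop (4*z+1)] with n hn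
  set w : ℝ := ((n:ℝ)+1) * δ with hwdef
  have hw : 0 < w := by positivity
  have hwd : ((n:ℝ)+1+1) * δ = w + δ := by ring
  have hwd2 : (((n:ℝ)+2)*δ) = w + δ := by ring
  rw [hwd2] at hn
  have hGw := Real.Gamma_pos_of_pos hw
  have hGwd := Real.Gamma_pos_of_pos (show (0:ℝ) < w + δ by linarith)
  push_cast
  rw [hwd, Real.norm_eq_abs, Real.norm_eq_abs,
    abs_of_nonneg (by positivity), abs_of_nonneg (by positivity)]
  rw [div_le_iff₀ hGwd, pow_succ]
  have hkey := gamma_step hδ0 hδ1 hw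
  have hδw : δ ≤ w := by nlinarith [Nat.cast_nonneg (α := ℝ) n]
  have hrw : (w+δ)^(1-δ) = (w+δ) / (w+δ)^δ := by
    rw [Real.rpow_sub (by linarith), Real.rpow_one]
  have hA : 0 < (4*z+1 : ℝ) := by linarith
  have hbound : 2*z*(w+δ)^(1-δ) ≤ w := by
    rw [hrw]
    have h5 : (w+δ)/(w+δ)^δ ≤ (w+δ)/(4*z+1) :=
      div_le_div_of_nonneg_left (by linarith) hA hn
    calc 2*z*((w+δ)/(w+δ)^δ) ≤ 2*z*((w+δ)/(4*z+1)) :=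
          mul_le_mul_of_nonneg_left h5 (by linarith)
    _ ≤ 2*z*((2*w)/(4*z+1)) := by gcongr <;> linarith
    _ ≤ w := by
          rw [show 2*z*(2*w/(4*z+1)) = (4*z*w)/(4*z+1) by ring, div_le_iff₀ hA]
          nlinarith
  have hpow : 0 < (w+δ)^(1-δ) := Real.rpow_pos_of_pos (by linarith) _
  have h6 : 2*z*Real.Gamma w ≤ Real.Gamma (w+δ) := by
    have hh := mul_le_mul_of_nonneg_right hbound hGw.le
    have hh2 : w * Real.Gamma w ≤ Real.Gamma (w+δ) * (w+δ)^(1-δ) := hkey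
    have : (2*z*Real.Gamma w) * (w+δ)^(1-δ) ≤ Real.Gamma (w+δ) * (w+δ)^(1-δ) := by nlinarith
    exact le_of_mul_le_mul_right this hpow
  calc z^n * z ≤ z^n * (Real.Gamma (w+δ)/(2*Real.Gamma w)) := by
        apply mul_le_mul_of_nonneg_left _ (pow_nonneg hz n)
        rw [le_div_iff₀ (by positivity)]
        nlinarith
  _ = 1/2*(z^n/Real.Gamma w)*Real.Gamma (w+δ) := by field_simp

set_option maxHeartbeats 1000000 in
lemma kernelAux {α u p : ℝ} (hα0 : 0 ≤ α) (hα1 : α < 1) (hu : 0 < u) (hp : 0 < p) :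
    IntervalIntegrable (fun s => (u - s)^(-α) * (s^(-α) * s^(p-(1-α)))) volume 0 u ∧
    ∫ s in (0:ℝ)..u, (u - s)^(-α) * (s^(-α) * s^(p-(1-α)))
      = Real.Gamma p * Real.Gamma (1-α) / Real.Gamma (p + (1-α)) * u ^ (p - α) := by
  have heq : EqOn (fun s : ℝ => s^(p-1) * (u-s)^((1-α)-1))
      (fun s => (u - s)^(-α) * (s^(-α) * s^(p-(1-α)))) (Ioc 0 u) := by
    intro s hs
    simp only
    rw [← Real.rpow_add hs.1, show -α + (p - (1-α)) = p - 1 by ring,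
      show (1-α) - 1 = -α by ring]
    ring
  have hbi := betaIntegrable hp (show (0:ℝ) < 1 - α by linarith) hu
  constructor
  · rw [intervalIntegrable_iff, uIoc_of_le hu.le]
    exact (hbi.1).congr_fun heq measurableSet_Ioc
  · have h2 : (∫ s in (0:ℝ)..u, (u - s)^(-α) * (s^(-α) * s^(p-(1-α))))
        = ∫ s in (0:ℝ)..u, s^(p-1) * (u-s)^((1-α)-1) := by
      rw [intervalIntegral.integral_of_le hu.le, intervalIntegral.integral_of_le hu.le]
      exact (setIntegral_congr_fun measurableSet_Ioc heq).symm
    rw [h2, betaEval hp (by linarith) hu, show p + (1-α) - 1 = p - α by ring]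

theorem stmt19 (α a b : ℝ) (hα0 : 0 ≤ α) (hα1 : α < 1) (ha : 0 ≤ a) (hb : 0 ≤ b)
    (x : ℝ → ℝ) (hcont : ContinuousOn x (Set.Ici 0))
    (hnonneg : ∀ t ≥ (0:ℝ), 0 ≤ x t)
    (hineq : ∀ t ≥ (0:ℝ),
      x t ≤ a + b * t ^ α * ∫ s in (0:ℝ)..t, (t - s) ^ (-α) * s ^ (-α) * x s) :
    ∀ t ≥ (0:ℝ),
      x t ≤ a * Real.Gamma (1 - α) *
        ∑' n : ℕ, (b * Real.Gamma (1 - α) * t ^ (1 - α)) ^ n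
            / Real.Gamma ((n + 1) * (1 - α)) := by
  intro t ht
  have hδ0 : (0:ℝ) < 1 - α := by linarith
  have hG : 0 < Real.Gamma (1 - α) := Real.Gamma_pos_of_pos hδ0
  set δ : ℝ := 1 - α with hδdef
  set G : ℝ := Real.Gamma δ with hGdef
  set c : ℝ := b * G with hcdef
  have hc : 0 ≤ c := by positivity
  have hGk : ∀ r : ℝ, 0 ≤ r → 0 < Real.Gamma ((r+1)*δ) := by
    intro r hr
    apply Real.Gamma_pos_of_pos
    have : (0:ℝ) < r + 1 := by linarith
    positivity
  set e : ℕ → ℝ → ℝ := fun k u => c^k * u^((k:ℝ)*δ) * G / Real.Gamma (((k:ℝ)+1)*δ) with hedef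
  have he_nonneg : ∀ k (u : ℝ), 0 ≤ u → 0 ≤ e k u := by
    intro k u hu
    exact div_nonneg (mul_nonneg (mul_nonneg (pow_nonneg hc k) (Real.rpow_nonneg hu _)) hG.le)
      (hGk k (Nat.cast_nonneg k)).le
  have he0 : ∀ u : ℝ, e 0 u = 1 := by
    intro u
    simp only [hedef, pow_zero, Nat.cast_zero, zero_mul, Real.rpow_zero, one_mul, zero_add]
    rw [← hGdef, div_self hG.ne']
  -- bound on [0,t]
  obtain ⟨M, hMb⟩ := (isCompact_Icc (a := (0:ℝ)) (b := t)).exists_bound_of_continuousOn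
    (hcont.mono (fun s hs => hs.1))
  have hM : ∀ s ∈ Icc (0:ℝ) t, x s ≤ M := by
    intro s hs
    calc x s ≤ ‖x s‖ := le_abs_self _
    _ ≤ M := hMb s hs
  have hM0 : 0 ≤ M := le_trans (norm_nonneg _) (hMb 0 ⟨le_refl 0, ht⟩)
  -- main induction
  have claim : ∀ n : ℕ, ∀ u ∈ Icc (0:ℝ) t,
      x u ≤ a * (∑ k ∈ Finset.range n, e k u) + M * e n u := by
    intro n
    induction n with
    | zero =>
      intro u hu
      simpa [he0] using hM u hu
    | succ n ih =>
      intro u hu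
      by_cases hu0 : u = 0
      · subst hu0
        have hx0 : x 0 ≤ a := by simpa using hineq 0 le_rfl
        have h1 : e 0 0 ≤ ∑ k ∈ Finset.range (n+1), e k 0 :=
          Finset.single_le_sum (f := fun k => e k 0) (fun k _ => he_nonneg k 0 le_rfl)
            (Finset.mem_range.mpr (Nat.succ_pos n))
        rw [he0] at h1
        have h2 := he_nonneg (n+1) 0 le_rfl
        nlinarith
      · have hu' : 0 < u := lt_of_le_of_ne hu.1 (Ne.symm hu0)
        have hut : u ≤ t := hu.2
        -- the kernel-power functions
        have hker : ∀ k : ℕ,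
            IntervalIntegrable (fun s => (u - s)^(-α) * (s^(-α) * s^((((k:ℝ)+1)*δ)-(1-α)))) volume 0 u ∧
            ∫ s in (0:ℝ)..u, (u - s)^(-α) * (s^(-α) * s^((((k:ℝ)+1)*δ)-(1-α)))
              = Real.Gamma (((k:ℝ)+1)*δ) * G / Real.Gamma ((((k:ℝ)+1)*δ) + (1-α))
                  * u ^ ((((k:ℝ)+1)*δ) - α) := by
          intro k
          have hp : (0:ℝ) < ((k:ℝ)+1)*δ := by positivity
          exact kernelAux hα0 hα1 hu' hp
        -- F k = kernel times the (non-constant part of) e k, with constants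
        set F : ℕ → ℝ → ℝ := fun k s =>
          (c^k * G / Real.Gamma (((k:ℝ)+1)*δ)) *
            ((u - s)^(-α) * (s^(-α) * s^((((k:ℝ)+1)*δ)-(1-α)))) with hFdef
        have hFint : ∀ k : ℕ, IntervalIntegrable (F k) volume 0 u := by
          intro k
          exact ((hker k).1).const_mul _
        have hFval : ∀ k : ℕ, b * u ^ α * ∫ s in (0:ℝ)..u, F k s = e (k+1) u := by
          intro k
          rw [hFdef]
          simp only
          rw [intervalIntegral.integral_const_mul, (hker k).2]
          have hGamma_ne := (hGk (k:ℝ) (Nat.cast_nonneg k)).ne'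
          have hGamma2 : Real.Gamma ((((k:ℝ)+1)*δ) + (1-α)) = Real.Gamma (((k:ℝ)+1+1)*δ) := by
            rw [hδdef]; ring_nf
          have hupow : u ^ α * u ^ ((((k:ℝ)+1)*δ) - α) = u ^ (((k:ℝ)+1)*δ) := by
            rw [← Real.rpow_add hu']; ring_nf
          rw [hedef]
          simp only
          push_cast
          rw [hGamma2, pow_succ, ← hupow, hcdef]
          field_simp
        -- K * e k = F k pointwise
        have hKe : ∀ (k : ℕ) (s : ℝ), ((u-s)^(-α) * s^(-α)) * e k s = F k s := by
          intro k s
          rw [hFdef, hedef]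
          simp only
          rw [show ((k:ℝ)+1)*δ-(1-α) = (k:ℝ)*δ by rw [hδdef]; ring]
          ring
        -- pointwise comparison on Icc 0 u
        have hmaj : ∀ s ∈ Icc (0:ℝ) u, (u - s)^(-α) * s^(-α) * x s
            ≤ a * (∑ k ∈ Finset.range n, F k s) + M * F n s := by
          intro s hs
          have hsx : x s ≤ a * (∑ k ∈ Finset.range n, e k s) + M * e n s :=
            ih s ⟨hs.1, le_trans hs.2 hut⟩
          have hK0 : 0 ≤ (u - s)^(-α) * s^(-α) :=
            mul_nonneg (Real.rpow_nonneg (by linarith [hs.2]) _) (Real.rpow_nonneg hs.1 _)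
          have hFs : (∑ k ∈ Finset.range n, F k s)
              = ((u-s)^(-α) * s^(-α)) * ∑ k ∈ Finset.range n, e k s := by
            rw [Finset.mul_sum]
            exact Finset.sum_congr rfl (fun k _ => (hKe k s).symm)
          calc (u - s)^(-α) * s^(-α) * x s
              ≤ ((u-s)^(-α) * s^(-α)) * (a * (∑ k ∈ Finset.range n, e k s) + M * e n s) :=
                mul_le_mul_of_nonneg_left hsx hK0
          _ = a * (∑ k ∈ Finset.range n, F k s) + M * F n s := by
                rw [hFs, ← hKe n s]
                ring
        -- integrability of majorant and of K*x
        have hFsum : IntervalIntegrable (fun s => ∑ k ∈ Finset.range n, F k s) volume 0 u := by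
          have h := IntervalIntegrable.sum (μ := volume) (a := (0:ℝ)) (b := u)
            (Finset.range n) (f := F) (fun k _ => hFint k)
          have hfun : (∑ k ∈ Finset.range n, F k) = fun s => ∑ k ∈ Finset.range n, F k s := by
            ext s
            simp [Finset.sum_apply]
          rwa [hfun] at h
        have hSint : IntervalIntegrable (fun s => a * (∑ k ∈ Finset.range n, F k s) + M * F n s)
            volume 0 u := (hFsum.const_mul a).add ((hFint n).const_mul M)
        have hKx : IntervalIntegrable (fun s => (u - s)^(-α) * s^(-α) * x s) volume 0 u := by
          rw [intervalIntegrable_iff, uIoc_of_le hu'.le]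
          apply Integrable.mono' hSint.1
          · apply AEStronglyMeasurable.mul
            · exact Measurable.aestronglyMeasurable (by fun_prop)
            · exact (hcont.mono (fun s hs => le_of_lt hs.1)).aestronglyMeasurable measurableSet_Ioc
          · filter_upwards [ae_restrict_mem measurableSet_Ioc] with s hs
            have hs' : s ∈ Icc (0:ℝ) u := ⟨hs.1.le, hs.2⟩
            have hK0 : 0 ≤ (u - s)^(-α) * s^(-α) :=
              mul_nonneg (Real.rpow_nonneg (by linarith [hs'.2]) _) (Real.rpow_nonneg hs'.1 _)
            rw [Real.norm_eq_abs, abs_of_nonneg (mul_nonneg hK0 (hnonneg s hs'.1))]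
            exact hmaj s hs'
        have hcomp : (∫ s in (0:ℝ)..u, (u - s)^(-α) * s^(-α) * x s)
            ≤ ∫ s in (0:ℝ)..u, (a * (∑ k ∈ Finset.range n, F k s) + M * F n s) :=
          intervalIntegral.integral_mono_on hu'.le hKx hSint hmaj
        have hIval : (∫ s in (0:ℝ)..u, (a * (∑ k ∈ Finset.range n, F k s) + M * F n s))
            = a * (∑ k ∈ Finset.range n, ∫ s in (0:ℝ)..u, F k s)
              + M * ∫ s in (0:ℝ)..u, F n s := by
          rw [intervalIntegral.integral_add (hFsum.const_mul a) ((hFint n).const_mul M),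
            intervalIntegral.integral_const_mul, intervalIntegral.integral_const_mul,
            intervalIntegral.integral_finset_sum (fun k _ => hFint k)]
        have hbu : 0 ≤ b * u ^ α := mul_nonneg hb (Real.rpow_nonneg hu'.le _)
        have h2 : x u ≤ a + b * u ^ α * (a * (∑ k ∈ Finset.range n, ∫ s in (0:ℝ)..u, F k s)
            + M * ∫ s in (0:ℝ)..u, F n s) := by
          calc x u ≤ a + b * u ^ α * ∫ s in (0:ℝ)..u, (u - s) ^ (-α) * s ^ (-α) * x s :=
                hineq u hu'.le
          _ ≤ _ := by
              refine add_le_add le_rfl ?_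
              apply mul_le_mul_of_nonneg_left _ hbu
              rw [← hIval] at *
              exact hcomp
        have h3 : a + b * u ^ α * (a * (∑ k ∈ Finset.range n, ∫ s in (0:ℝ)..u, F k s)
            + M * ∫ s in (0:ℝ)..u, F n s)
            = a * (∑ k ∈ Finset.range (n+1), e k u) + M * e (n+1) u := by
          rw [Finset.sum_range_succ' (fun k => e k u) n, he0, ← hFval n]
          have hcongr : ∑ k ∈ Finset.range n, e (k+1) u
              = ∑ k ∈ Finset.range n, b * u ^ α * ∫ s in (0:ℝ)..u, F k s :=
            Finset.sum_congr rfl (fun k _ => (hFval k).symm)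
          rw [hcongr, ← Finset.mul_sum]
          ring
        exact h2.trans_eq h3
  -- pass to the limit
  have hδ1 : δ ≤ 1 := by rw [hδdef]; linarith
  have hz : (0:ℝ) ≤ c * t ^ δ := mul_nonneg hc (Real.rpow_nonneg ht _)
  have hsum : Summable (fun k : ℕ => (c*t^δ)^k / Real.Gamma (((k:ℝ)+1)*δ)) :=
    summableML hδ0 hδ1 _ hz
  have hterm : ∀ k : ℕ, e k t = G * ((c*t^δ)^k / Real.Gamma (((k:ℝ)+1)*δ)) := by
    intro k
    have htk : t ^ ((k:ℝ)*δ) = (t ^ δ)^(k:ℕ) := by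
      rw [mul_comm, Real.rpow_mul ht, Real.rpow_natCast]
    rw [hedef]
    simp only
    rw [htk, mul_pow]
    ring
  have hfin : ∀ n : ℕ, x t ≤ a * G * (∑ k ∈ Finset.range n, (c*t^δ)^k / Real.Gamma (((k:ℝ)+1)*δ))
      + M * G * ((c*t^δ)^n / Real.Gamma (((n:ℝ)+1)*δ)) := by
    intro n
    have h := claim n t ⟨ht, le_refl t⟩
    rw [Finset.sum_congr rfl (fun k _ => hterm k), hterm n, ← Finset.mul_sum] at h
    calc x t ≤ a * (G * ∑ k ∈ Finset.range n, (c*t^δ)^k / Real.Gamma (((k:ℝ)+1)*δ))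
        + M * (G * ((c*t^δ)^n / Real.Gamma (((n:ℝ)+1)*δ))) := h
    _ = _ := by ring
  have htendsto : Tendsto (fun n : ℕ => a * G * (∑ k ∈ Finset.range n, (c*t^δ)^k / Real.Gamma (((k:ℝ)+1)*δ))
      + M * G * ((c*t^δ)^n / Real.Gamma (((n:ℝ)+1)*δ))) atTop
      (𝓝 (a * G * (∑' k : ℕ, (c*t^δ)^k / Real.Gamma (((k:ℝ)+1)*δ)) + M * G * 0)) :=
    (hsum.hasSum.tendsto_sum_nat.const_mul _).add (hsum.tendsto_atTop_zero.const_mul _)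
  have hfinal := ge_of_tendsto htendsto (Eventually.of_forall hfin)
  simpa using hfinal
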